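/- Let p be a prime, e a positive integer, and l_1, …, l_e nonnegative integers, and let A be a finite abelian group isomorphic to the direct product ∏_{j=1}^{e} (C_{p^j})^{l_j} of l_j copies of the cyclic group of order p^j for each j. For 1 ≤ i ≤ e set L_i = Σ_{j=i}^{e} l_j and assume L_i ≥ 1. Then the number of cyclic subgroups of A of order p^i equals ((p^{L_i} − 1)/(p − 1)) · p^{(L_i − 1)(i − 1) + Σ_{j<i} l_j·j}. -/

import Mathlib

open Finset

lemma aux_cyclic_card_pow {G : Type*} [Group G] [Fintype G] [IsCyclic G] [DecidableEq G]
    {d : ℕ} (hd : d ∣ Fintype.card G) (hd0 : d ≠ 0) :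
    #{x : G | x ^ d = 1} = d := by
  rw [← sum_card_orderOf_eq_card_pow_eq_one (G := G) hd0]
  have : ∀ m ∈ d.divisors, #{a : G | orderOf a = m} = m.totient := fun m hm =>
    IsCyclic.card_orderOf_eq_totient ((Nat.mem_divisors.mp hm).1.trans hd)
  rw [Finset.sum_congr rfl this, Nat.sum_totient]

-- C: torsion count in Multiplicative (ZMod (p^j))
lemma aux_zmod_pow_count {p : ℕ} (hp : p.Prime) (j k : ℕ) :
    Nat.card {y : Multiplicative (ZMod (p ^ j)) // y ^ p ^ k = 1} = p ^ min k j := by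
  haveI : NeZero (p ^ j) := ⟨pow_ne_zero _ hp.pos.ne'⟩
  classical
  have hcard : Fintype.card (Multiplicative (ZMod (p ^ j))) = p ^ j := by
    rw [Fintype.card_multiplicative, ZMod.card]
  have hiff : ∀ y : Multiplicative (ZMod (p ^ j)), y ^ p ^ k = 1 ↔ y ^ p ^ min k j = 1 := by
    intro y
    constructor
    · intro h
      have h1 : orderOf y ∣ p ^ k := orderOf_dvd_of_pow_eq_one h
      have h2 := orderOf_dvd_card (x := y)
      rw [hcard] at h2
      obtain ⟨m, hmj, hm⟩ := (Nat.dvd_prime_pow hp).mp h2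
      have hmk : m ≤ k := by
        rw [hm] at h1
        exact (Nat.pow_dvd_pow_iff_le_right hp.one_lt).mp h1
      have : orderOf y ∣ p ^ min k j := hm ▸ pow_dvd_pow p (le_min hmk hmj)
      exact orderOf_dvd_iff_pow_eq_one.mp this
    · intro h
      have : orderOf y ∣ p ^ min k j := orderOf_dvd_of_pow_eq_one h
      exact orderOf_dvd_iff_pow_eq_one.mp (this.trans (pow_dvd_pow p (min_le_left _ _)))
  rw [Nat.card_eq_fintype_card, Fintype.card_subtype]
  have hdvd : p ^ min k j ∣ Fintype.card (Multiplicative (ZMod (p ^ j))) := by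
    rw [hcard]; exact pow_dvd_pow p (min_le_right _ _)
  have := aux_cyclic_card_pow (G := Multiplicative (ZMod (p ^ j)))
    (d := p ^ min k j) hdvd (pow_ne_zero _ hp.pos.ne')
  rw [← this]
  congr 1
  exact Finset.filter_congr fun x _ => hiff x

-- equiv: torsion of a Pi group is the Pi of torsions
def auxPowEquiv {ι : Type*} (G : ι → Type*) [∀ i, Monoid (G i)] (n : ℕ) :
    {x : (∀ i, G i) // x ^ n = 1} ≃ ∀ i, {y : G i // y ^ n = 1} where
  toFun x i := ⟨x.1 i, by have := congrFun x.2 i; simpa using this⟩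
  invFun y := ⟨fun i => (y i).1, by funext i; simpa using (y i).2⟩
  left_inv _ := rfl
  right_inv _ := rfl

-- equiv transfer across MulEquiv
def auxMulEquivPow {M N : Type*} [Monoid M] [Monoid N] (e : M ≃* N) (n : ℕ) :
    {x : M // x ^ n = 1} ≃ {y : N // y ^ n = 1} :=
  e.toEquiv.subtypeEquiv fun a => by
    show a ^ n = 1 ↔ (e a) ^ n = 1
    rw [← map_pow, EmbeddingLike.map_eq_one_iff]

-- torsion count in A
lemma aux_A_pow_count {A : Type*} [CommGroup A] [Fintype A] {p : ℕ} (hp : p.Prime) (e : ℕ)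
    (l : ℕ → ℕ)
    (f : A ≃* ((j : (Finset.Icc 1 e : Finset ℕ)) →
        Fin (l (j : ℕ)) → Multiplicative (ZMod (p ^ (j : ℕ))))) (k : ℕ) :
    Nat.card {x : A // x ^ p ^ k = 1} = p ^ (∑ j ∈ Finset.Icc 1 e, min k j * l j) := by
  rw [Nat.card_congr (auxMulEquivPow f (p ^ k))]
  rw [Nat.card_congr (auxPowEquiv _ (p ^ k))]
  rw [Nat.card_pi]
  have : ∀ j : (Finset.Icc 1 e : Finset ℕ),
      Nat.card {y : Fin (l (j : ℕ)) → Multiplicative (ZMod (p ^ (j : ℕ))) // y ^ p ^ k = 1}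
        = (p ^ min k (j : ℕ)) ^ l (j : ℕ) := by
    intro j
    rw [Nat.card_congr (auxPowEquiv _ (p ^ k)), Nat.card_pi]
    simp [aux_zmod_pow_count hp]
  rw [Finset.prod_congr rfl fun j _ => this j]
  rw [Finset.prod_coe_sort (Finset.Icc 1 e) (fun j => (p ^ min k j) ^ l j)]
  rw [← Finset.prod_pow_eq_pow_sum]
  exact Finset.prod_congr rfl fun j _ => by rw [← pow_mul]

-- split: torsion count = exact-order count + lower torsion count
lemma aux_order_split {G : Type*} [Group G] [Fintype G] {p i : ℕ} (hp : p.Prime) (hi : 1 ≤ i) :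
    Nat.card {x : G // x ^ p ^ i = 1}
      = Nat.card {x : G // orderOf x = p ^ i} + Nat.card {x : G // x ^ p ^ (i - 1) = 1} := by
  classical
  simp only [Nat.card_eq_fintype_card, Fintype.card_subtype]
  have key : ∀ x : G, x ^ p ^ i = 1 ↔ (orderOf x = p ^ i ∨ x ^ p ^ (i - 1) = 1) := by
    intro x
    constructor
    · intro h
      have h1 : orderOf x ∣ p ^ i := orderOf_dvd_of_pow_eq_one h
      obtain ⟨m, hmi, hm⟩ := (Nat.dvd_prime_pow hp).mp h1
      rcases eq_or_lt_of_le hmi with h' | h'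
      · exact Or.inl (by rw [hm, h'])
      · refine Or.inr (orderOf_dvd_iff_pow_eq_one.mp ?_)
        rw [hm]
        exact pow_dvd_pow p (by omega)
    · rintro (h | h)
      · exact orderOf_dvd_iff_pow_eq_one.mp (h ▸ dvd_rfl)
      · exact orderOf_dvd_iff_pow_eq_one.mp
          ((orderOf_dvd_of_pow_eq_one h).trans (pow_dvd_pow p (by omega)))
  rw [Finset.filter_congr (fun x (_ : x ∈ Finset.univ) => key x), Finset.filter_or,
    Finset.card_union_of_disjoint]
  refine Finset.disjoint_filter.mpr fun x _ hx h => ?_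
  have := orderOf_dvd_of_pow_eq_one h
  rw [hx] at this
  have := (Nat.pow_dvd_pow_iff_le_right hp.one_lt).mp this
  omega

lemma aux_isCyclic_zpowers {G : Type*} [Group G] (a : G) :
    IsCyclic ↥(Subgroup.zpowers a) := by
  refine ⟨⟨⟨a, Subgroup.mem_zpowers a⟩, fun x => ?_⟩⟩
  obtain ⟨k, hk⟩ := x.2
  exact ⟨k, Subtype.ext (by simpa using hk)⟩

-- A: number of cyclic subgroups of order n times totient n = number of elements of order n
lemma aux_count_subgroups {G : Type*} [Group G] [Fintype G] {n : ℕ} (hn : 0 < n) :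
    Nat.card {C : Subgroup G // IsCyclic ↥C ∧ Nat.card ↥C = n} * n.totient
      = Nat.card {a : G // orderOf a = n} := by
  classical
  haveI : Fintype (Subgroup G) := Fintype.ofFinite _
  rw [Nat.card_eq_fintype_card, Nat.card_eq_fintype_card, Fintype.card_subtype,
    Fintype.card_subtype]
  rw [Finset.card_eq_sum_card_fiberwise
    (f := fun a : G => Subgroup.zpowers a)
    (t := {C : Subgroup G | IsCyclic ↥C ∧ Nat.card ↥C = n})
    (fun a ha => by
      simp only [Finset.mem_coe, Finset.mem_filter, Finset.mem_univ, true_and] at ha ⊢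
      exact ⟨aux_isCyclic_zpowers a, by rw [Nat.card_zpowers, ha]⟩)]
  rw [Finset.sum_congr rfl (g := fun _ => n.totient) ?_, Finset.sum_const, smul_eq_mul, mul_comm]
  intro C hC
  simp only [Finset.mem_filter, Finset.mem_univ, true_and] at hC
  obtain ⟨hcyc, hcard⟩ := hC
  haveI : IsCyclic ↥C := hcyc
  have hcardC : Fintype.card ↥C = n := by rw [← Nat.card_eq_fintype_card, hcard]
  rw [← IsCyclic.card_orderOf_eq_totient (α := ↥C) (d := n) (hcardC ▸ dvd_rfl)]
  refine (Finset.card_bij (fun (b : ↥C) _ => (b : G)) ?_ ?_ ?_).symm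
  · intro b hb
    simp only [Finset.mem_filter, Finset.mem_univ, true_and] at hb ⊢
    constructor
    · rw [Subgroup.orderOf_coe, hb]
    · refine Subgroup.eq_of_le_of_card_ge (Subgroup.zpowers_le.mpr b.2) ?_
      rw [Nat.card_zpowers, Subgroup.orderOf_coe, hb, hcard]
  · intro a _ b _ h
    exact Subtype.ext h
  · intro a ha
    simp only [Finset.mem_filter, Finset.mem_univ, true_and] at ha
    obtain ⟨h1, h2⟩ := ha
    have haC : a ∈ C := h2 ▸ Subgroup.mem_zpowers a
    refine ⟨⟨a, haC⟩, ?_, rfl⟩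
    simp only [Finset.mem_filter, Finset.mem_univ, true_and]
    rw [← Subgroup.orderOf_coe, h1]

/-- Lemma (number of cyclic subgroups of given order): let `p` be a prime and
`A ≅ ∏_{j=1}^{e} (C_{p^j})^{l_j}`. For `1 ≤ i ≤ e` let `L_i = ∑_{j=i}^{e} l_j` and
assume `L_i ≥ 1`. Then the number of cyclic subgroups of `A` of order `p^i` is
`((p^{L_i} - 1)/(p - 1)) · p^{(L_i - 1)(i - 1) + ∑_{j<i} l_j · j}`. -/
theorem count_cyclic_subgroups_of_order {A : Type*} [CommGroup A] [Fintype A]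
    (p e : ℕ) (hp : p.Prime) (he : 1 ≤ e) (l : ℕ → ℕ)
    (hiso : Nonempty
      (A ≃* ((j : (Finset.Icc 1 e : Finset ℕ)) →
        Fin (l (j : ℕ)) → Multiplicative (ZMod (p ^ (j : ℕ))))))
    (i : ℕ) (hi1 : 1 ≤ i) (hie : i ≤ e)
    (hL : 1 ≤ ∑ j ∈ Finset.Icc i e, l j) :
    Nat.card {C : Subgroup A // IsCyclic ↥C ∧ Nat.card ↥C = p ^ i} =
      ((p ^ (∑ j ∈ Finset.Icc i e, l j) - 1) / (p - 1)) *
        p ^ (((∑ j ∈ Finset.Icc i e, l j) - 1) * (i - 1) +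
          ∑ j ∈ Finset.Ico 1 i, l j * j) := by
  obtain ⟨f⟩ := hiso
  set L := ∑ j ∈ Finset.Icc i e, l j with hLdef
  set S := ∑ j ∈ Finset.Ico 1 i, l j * j with hSdef
  have hdis : Disjoint (Finset.Ico 1 i) (Finset.Icc i e) := by
    rw [Finset.disjoint_left]
    intro j hj hj'
    simp only [Finset.mem_Ico, Finset.mem_Icc] at hj hj'
    omega
  have hsplit : Finset.Icc 1 e = Finset.Ico 1 i ∪ Finset.Icc i e := by
    ext j
    simp only [Finset.mem_Icc, Finset.mem_union, Finset.mem_Ico]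
    omega
  -- torsion counts
  have hEi : (∑ j ∈ Finset.Icc 1 e, min i j * l j) = S + i * L := by
    rw [hsplit, Finset.sum_union hdis]
    congr 1
    · refine Finset.sum_congr rfl fun j hj => ?_
      simp only [Finset.mem_Ico] at hj
      rw [min_eq_right (by omega), mul_comm]
    · rw [Finset.mul_sum]
      refine Finset.sum_congr rfl fun j hj => ?_
      simp only [Finset.mem_Icc] at hj
      rw [min_eq_left (by omega)]
  have hEi' : (∑ j ∈ Finset.Icc 1 e, min (i - 1) j * l j) = S + (i - 1) * L := by
    rw [hsplit, Finset.sum_union hdis]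
    congr 1
    · refine Finset.sum_congr rfl fun j hj => ?_
      simp only [Finset.mem_Ico] at hj
      rw [min_eq_right (by omega), mul_comm]
    · rw [Finset.mul_sum]
      refine Finset.sum_congr rfl fun j hj => ?_
      simp only [Finset.mem_Icc] at hj
      rw [min_eq_left (by omega)]
  have h1 := aux_A_pow_count hp e l f i
  have h2 := aux_A_pow_count hp e l f (i - 1)
  rw [hEi] at h1
  rw [hEi'] at h2
  have hsplit2 := aux_order_split (G := A) (p := p) (i := i) hp hi1
  rw [h1, h2] at hsplit2
  -- number of elements of order p^i
  set X := Nat.card {x : A // orderOf x = p ^ i} with hXdef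
  have hXeq : X = p ^ (S + (i - 1) * L) * (p ^ L - 1) := by
    have hmul : p ^ (S + (i - 1) * L) * p ^ L = p ^ (S + i * L) := by
      rw [← pow_add]
      congr 1
      have : (i - 1) * L + L = i * L := by
        have : i - 1 + 1 = i := by omega
        calc (i - 1) * L + L = (i - 1 + 1) * L := by ring
        _ = i * L := by rw [this]
      omega
    have hsub : p ^ (S + (i - 1) * L) * (p ^ L - 1)
        = p ^ (S + (i - 1) * L) * p ^ L - p ^ (S + (i - 1) * L) := by
      rw [Nat.mul_sub, mul_one]
    omega
  -- count subgroups
  have hcount := aux_count_subgroups (G := A) (n := p ^ i) (pow_pos hp.pos i)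
  rw [← hXdef] at hcount
  have htot : (p ^ i).totient = p ^ (i - 1) * (p - 1) :=
    Nat.totient_prime_pow hp (by omega)
  -- final computation
  have hdvd : (p - 1) ∣ (p ^ L - 1) := by
    simpa using Nat.sub_dvd_pow_sub_pow p 1 L
  have hrhs : ((p ^ L - 1) / (p - 1)) * p ^ ((L - 1) * (i - 1) + S) * (p ^ i).totient
      = p ^ (S + (i - 1) * L) * (p ^ L - 1) := by
    rw [htot]
    have hexp : (L - 1) * (i - 1) + S + (i - 1) = S + (i - 1) * L := by
      have h' : (L - 1) * (i - 1) + (i - 1) = (i - 1) * L := by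
        calc (L - 1) * (i - 1) + (i - 1) = (L - 1 + 1) * (i - 1) := by ring
        _ = L * (i - 1) := by rw [Nat.sub_add_cancel hL]
        _ = (i - 1) * L := by ring
      omega
    calc ((p ^ L - 1) / (p - 1)) * p ^ ((L - 1) * (i - 1) + S) * (p ^ (i - 1) * (p - 1))
        = (((p ^ L - 1) / (p - 1)) * (p - 1)) * (p ^ ((L - 1) * (i - 1) + S) * p ^ (i - 1)) := by
          ring
      _ = (p ^ L - 1) * p ^ ((L - 1) * (i - 1) + S + (i - 1)) := by
          rw [Nat.div_mul_cancel hdvd, ← pow_add]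
      _ = p ^ (S + (i - 1) * L) * (p ^ L - 1) := by rw [hexp]; ring
  have htotpos : 0 < (p ^ i).totient := Nat.totient_pos.mpr (pow_pos hp.pos i)
  refine Nat.eq_of_mul_eq_mul_right htotpos ?_
  rw [hcount, hrhs, hXeq]
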